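/- Let a, b, x₁, x₂ be unit quaternions with ⟪x₁, a⟫ = 0, ⟪x₁, b⟫ > 0, ⟪x₂, b⟫ = 0 and ⟪x₂, a⟫ > 0. Then a⁻¹·x₁ ≠ b⁻¹·x₂. (Consequently the left projection of the angle formed by the dual great spheres a* and b*, which maps points of a* with ⟪·, b⟫ > 0 by left multiplication by a⁻¹ and points of b* with ⟪·, a⟫ > 0 by left multiplication by b⁻¹, is injective.) -/

import Mathlib

open scoped Quaternion RealInnerProductSpace

lemma re_mul_comm (x y : ℍ[ℝ]) : (x * y).re = (y * x).re := by
  simp only [Quaternion.re_mul]; ring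

lemma norm_one_inv_eq_star (a : ℍ[ℝ]) (ha : ‖a‖ = 1) : a⁻¹ = star a := by
  have h : Quaternion.normSq a = 1 := by
    rw [Quaternion.normSq_eq_norm_mul_self, ha]; ring
  rw [Quaternion.inv_def, h]
  simp

/-- Injectivity of the left projection of the angle formed by the dual great spheres
`a*` and `b*`: if `x₁` lies on `a*` with `⟪x₁, b⟫ > 0` and `x₂` lies on `b*` with
`⟪x₂, a⟫ > 0`, then `a⁻¹ * x₁ ≠ b⁻¹ * x₂`. -/
theorem stmt_3 (a b x₁ x₂ : ℍ[ℝ]) (ha : ‖a‖ = 1) (hb : ‖b‖ = 1)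
    (hx₁ : ‖x₁‖ = 1) (hx₂ : ‖x₂‖ = 1)
    (h1 : ⟪x₁, a⟫ = 0) (h2 : 0 < ⟪x₁, b⟫)
    (h3 : ⟪x₂, b⟫ = 0) (h4 : 0 < ⟪x₂, a⟫) :
    a⁻¹ * x₁ ≠ b⁻¹ * x₂ := by
  intro h
  rw [norm_one_inv_eq_star a ha, norm_one_inv_eq_star b hb] at h
  set u : ℍ[ℝ] := star a * x₁ with hu
  have hre_u : u.re = 0 := by
    have : ⟪x₁, a⟫ = (star a * x₁).re := by
      rw [Quaternion.inner_def, re_mul_comm]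
    rw [this] at h1; exact h1
  have hbb : b * star b = 1 := by
    have h : Quaternion.normSq b = 1 := by
      rw [Quaternion.normSq_eq_norm_mul_self, hb]; ring
    rw [Quaternion.self_mul_star, h, Quaternion.coe_one]
  have hx2 : x₂ = b * u := by
    rw [h, ← mul_assoc, hbb, one_mul]
  -- ⟪x₁, b⟫ = (star b * a * u).re since x₁ = a * u
  have haa : a * star a = 1 := by
    have h : Quaternion.normSq a = 1 := by
      rw [Quaternion.normSq_eq_norm_mul_self, ha]; ring
    rw [Quaternion.self_mul_star, h, Quaternion.coe_one]
  have hx1 : x₁ = a * u := by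
    rw [hu, ← mul_assoc, haa, one_mul]
  set q : ℍ[ℝ] := star b * a with hq
  have e1 : ⟪x₁, b⟫ = (q * u).re := by
    rw [Quaternion.inner_def, hx1, ← re_mul_comm, hq]
    rw [mul_assoc]
  have e2 : ⟪x₂, a⟫ = -(q * u).re := by
    rw [Quaternion.inner_def, hx2]
    have hstar : star u = -u := by
      ext <;> simp [Quaternion.re_star, Quaternion.imI_star, Quaternion.imJ_star,
        Quaternion.imK_star, hre_u]
    calc (b * u * star a).re = (star a * (b * u)).re := by
            rw [re_mul_comm]
      _ = (star (star a * (b * u))).re := by rw [Quaternion.re_star]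
      _ = (star (b * u) * a).re := by simp [star_mul, mul_assoc]
      _ = (star u * (star b * a)).re := by simp [star_mul, mul_assoc]
      _ = -(q * u).re := by
            rw [hstar, hq, re_mul_comm]
            simp
  rw [e1] at h2; rw [e2] at h4
  linarith
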